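/- arXiv:1603.00858 — 2 statements merged into one kernel-verified Lean document; each statement's English description precedes it below -/
import Mathlib

section
/- For every integer n ≥ 1, consider the CAPR instance with lexicographic preferences having two applicants a₁ (of capacity n) and a₂ (of capacity 1) and courses c_1,…,c_n, each of capacity 1; the preference list of a₁ is c_1, c_2, …, c_n and the preference list of a₂ consists of the single course c_n; the prerequisites, identical for both applicants, are the strict partial order generated by c_i → c_{i+1} for 1 ≤ i ≤ n−1. Then this instance has exactly two Pareto optimal matchings, namely M₁ = {(a₁, c_j) : 1 ≤ j ≤ n} of cardinality n and M₂ = {(a₂, c_n)} of cardinality 1. In particular, the difference in cardinalities between Pareto optimal matchings of a CAPR instance can be arbitrarily large. -/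
open Finset

def bundle {A C : Type*} [DecidableEq A] [DecidableEq C]
    (M : Finset (A × C)) (a : A) : Finset C :=
  (M.filter fun p => p.1 = a).image Prod.snd

def slots {A C : Type*} [DecidableEq C] (M : Finset (A × C)) (c : C) : ℕ :=
  (M.filter fun p => p.2 = c).card

/-- Lexicographic comparison of bundles w.r.t. a preference list (earlier = better). -/
def lexPrefers {C : Type*} [DecidableEq C] (l : List C) (S₁ S₂ : Finset C) : Prop :=
  ∃ c ∈ S₁ \ S₂, ∀ d ∈ (S₁ \ S₂) ∪ (S₂ \ S₁), l.idxOf c ≤ l.idxOf d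

def IsFeasible {A C : Type*} (pref : A → List C) (qA : A → ℕ)
    (prereq : A → C → C → Prop) (a : A) (S : Finset C) : Prop :=
  (∀ c ∈ S, c ∈ pref a) ∧ S.card ≤ qA a ∧
    ∀ c ∈ S, ∀ c', prereq a c c' → c' ∈ S

def IsMatching {A C : Type*} [DecidableEq A] [DecidableEq C]
    (pref : A → List C) (qA : A → ℕ) (qC : C → ℕ)
    (prereq : A → C → C → Prop) (M : Finset (A × C)) : Prop :=
  (∀ a, IsFeasible pref qA prereq a (bundle M a)) ∧ ∀ c, slots M c ≤ qC c

def Dominates {A C : Type*} [DecidableEq A] [DecidableEq C]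
    (pref : A → List C) (M' M : Finset (A × C)) : Prop :=
  (∃ a, lexPrefers (pref a) (bundle M' a) (bundle M a)) ∧
    ∀ a, ¬ lexPrefers (pref a) (bundle M a) (bundle M' a)

def ParetoOptimal {A C : Type*} [DecidableEq A] [DecidableEq C]
    (pref : A → List C) (qA : A → ℕ) (qC : C → ℕ)
    (prereq : A → C → C → Prop) (M : Finset (A × C)) : Prop :=
  IsMatching pref qA qC prereq M ∧
    ∀ M', IsMatching pref qA qC prereq M' → ¬ Dominates pref M' M

lemma mem_bundle {A C : Type*} [DecidableEq A] [DecidableEq C]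
    (M : Finset (A × C)) (a : A) (c : C) : c ∈ bundle M a ↔ (a, c) ∈ M := by
  simp only [bundle, Finset.mem_image, Finset.mem_filter]
  constructor
  · rintro ⟨⟨x, y⟩, ⟨hm, rfl⟩, rfl⟩; exact hm
  · intro h; exact ⟨(a, c), ⟨h, rfl⟩, rfl⟩

lemma not_lex_self {C : Type*} [DecidableEq C] (l : List C) (S : Finset C) :
    ¬ lexPrefers l S S := by
  rintro ⟨c, hc, -⟩; simp at hc

lemma not_lex_univ {n : ℕ} (l : List (Fin n)) (S : Finset (Fin n)) :
    ¬ lexPrefers l S Finset.univ := by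
  rintro ⟨c, hc, -⟩; simp at hc

lemma lex_univ {n : ℕ} (B : Finset (Fin n)) (hB : B ≠ Finset.univ) :
    lexPrefers (List.finRange n) Finset.univ B := by
  have hne : (Finset.univ \ B).Nonempty := by
    rw [Finset.sdiff_nonempty]
    intro h
    exact hB (Finset.univ_subset_iff.mp h)
  refine ⟨(Finset.univ \ B).min' hne, Finset.min'_mem _ _, ?_⟩
  intro d hd
  have hd' : d ∈ Finset.univ \ B := by
    rcases Finset.mem_union.mp hd with h | h
    · exact h
    · simp at h
  have := Finset.min'_le _ d hd'
  simpa using this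

lemma bundles_eq_ext {A C : Type*} [DecidableEq A] [DecidableEq C]
    (M M' : Finset (A × C)) (h : ∀ a, bundle M a = bundle M' a) : M = M' := by
  ext ⟨a, c⟩
  rw [← mem_bundle, ← mem_bundle, h]

/-- the CAPR instance with applicants `a₁ = false` (capacity `n`) and
`a₂ = true` (capacity 1) and courses `c_1, …, c_n` (capacity 1 each), where `a₁`
ranks all courses in increasing indicial order, `a₂'s` list is the single course
`c_n`, and the prerequisites (identical for both applicants) form the strict
partial order generated by `c_i → c_{i+1}`, i.e. `c_i → c_j` iff `i < j`.  Its
Pareto optimal matchings are exactly `M₁` (assigning all `n` courses to `a₁`) and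
`M₂` (assigning the single course `c_n` to `a₂`), which are distinct and have
cardinalities `n` and `1` respectively. -/
theorem capr_two_poms_arbitrary_gap {n : ℕ} (hn : 0 < n) :
    (∀ M : Finset (Bool × Fin n),
        ParetoOptimal
          (fun a : Bool =>
            if a then [(⟨n - 1, by omega⟩ : Fin n)] else List.finRange n)
          (fun a : Bool => if a then 1 else n) (fun _ => 1)
          (fun _ (c c' : Fin n) => c < c') M ↔
        (M = Finset.univ.image (fun j : Fin n => (false, j)) ∨
          M = {(true, (⟨n - 1, by omega⟩ : Fin n))})) ∧
    (Finset.univ.image (fun j : Fin n => (false, j)) ≠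
      ({(true, (⟨n - 1, by omega⟩ : Fin n))} : Finset (Bool × Fin n))) ∧
    (Finset.univ.image (fun j : Fin n => (false, j)) : Finset (Bool × Fin n)).card
      = n ∧
    ({(true, (⟨n - 1, by omega⟩ : Fin n))} : Finset (Bool × Fin n)).card = 1 := by
  set last : Fin n := ⟨n - 1, by omega⟩ with hlastdef
  set pref : Bool → List (Fin n) :=
    fun a : Bool => if a then [last] else List.finRange n with hpref
  set M₁ : Finset (Bool × Fin n) := Finset.univ.image (fun j : Fin n => (false, j))
    with hM₁def
  set M₂ : Finset (Bool × Fin n) := {(true, last)} with hM₂def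
  -- bundles of M₁ and M₂
  have hb1f : bundle M₁ false = Finset.univ := by
    ext c; simp [mem_bundle, hM₁def]
  have hb1t : bundle M₁ true = ∅ := by
    ext c; simp [mem_bundle, hM₁def]
  have hb2f : bundle M₂ false = ∅ := by
    ext c; simp [mem_bundle, hM₂def]
  have hb2t : bundle M₂ true = {last} := by
    ext c; simp [mem_bundle, hM₂def]
  -- generic structural facts about matchings
  have hnotboth : ∀ M : Finset (Bool × Fin n), (∀ c, slots M c ≤ 1) →
      ¬ ((false, last) ∈ M ∧ (true, last) ∈ M) := by
    rintro M hs ⟨h1, h2⟩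
    have hsub : ({(false, last), (true, last)} : Finset (Bool × Fin n)) ⊆
        M.filter (fun p => p.2 = last) := by
      intro p hp
      simp only [Finset.mem_insert, Finset.mem_singleton] at hp
      rcases hp with rfl | rfl <;> simp [Finset.mem_filter, h1, h2]
    have hcard := Finset.card_le_card hsub
    have h2' : ({(false, last), (true, last)} : Finset (Bool × Fin n)).card = 2 := by
      rw [Finset.card_insert_of_notMem (by simp)]; simp
    have := hs last
    simp only [slots] at this
    omega
  have hbtrue : ∀ M : Finset (Bool × Fin n),
      IsMatching pref (fun a : Bool => if a then 1 else n) (fun _ => 1)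
        (fun _ (c c' : Fin n) => c < c') M → bundle M true ⊆ {last} := by
    intro M hM c hc
    have := (hM.1 true).1 c hc
    simp [hpref] at this
    simp [this]
  have hlastmem : ∀ M : Finset (Bool × Fin n),
      IsMatching pref (fun a : Bool => if a then 1 else n) (fun _ => 1)
        (fun _ (c c' : Fin n) => c < c') M →
      ∀ c ∈ bundle M false, last ∈ bundle M false := by
    intro M hM c hc
    have hcle : c ≤ last := by
      have := c.isLt
      rw [Fin.le_def]
      exact (by omega : (c : ℕ) ≤ n - 1)
    rcases eq_or_lt_of_le hcle with h | h
    · rwa [← h]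
    · exact (hM.1 false).2.2 c hc last h
  -- a useful coercion lemma for `c ≤ last`
  -- M₁ is a matching
  have hM1 : IsMatching pref (fun a : Bool => if a then 1 else n) (fun _ => 1)
      (fun _ (c c' : Fin n) => c < c') M₁ := by
    constructor
    · intro a
      cases a
      · rw [show bundle M₁ false = Finset.univ from hb1f]
        refine ⟨?_, ?_, ?_⟩
        · intro c _; simp [hpref]
        · simp
        · intro c _ c' _; simp
      · rw [show bundle M₁ true = ∅ from hb1t]
        exact ⟨by simp, by simp, by simp⟩
    · intro c
      have hsub : M₁.filter (fun p => p.2 = c) ⊆ {(false, c)} := by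
        intro p hp
        obtain ⟨hp1, hp2⟩ := Finset.mem_filter.mp hp
        simp only [hM₁def, Finset.mem_image, Finset.mem_univ, true_and] at hp1
        obtain ⟨j, hj⟩ := hp1
        rw [← hj] at hp2 ⊢
        simp at hp2
        simp [hp2]
      calc slots M₁ c = (M₁.filter (fun p => p.2 = c)).card := rfl
        _ ≤ ({(false, c)} : Finset (Bool × Fin n)).card := Finset.card_le_card hsub
        _ = 1 := by simp
  -- M₂ is a matching
  have hM2 : IsMatching pref (fun a : Bool => if a then 1 else n) (fun _ => 1)
      (fun _ (c c' : Fin n) => c < c') M₂ := by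
    constructor
    · intro a
      cases a
      · rw [show bundle M₂ false = ∅ from hb2f]
        exact ⟨by simp, by simp, by simp⟩
      · rw [show bundle M₂ true = {last} from hb2t]
        refine ⟨?_, ?_, ?_⟩
        · intro c hc; simp at hc; simp [hpref, hc]
        · simp
        · intro c hc c' hc'
          simp at hc
          subst hc
          exfalso
          have := c'.isLt
          have : (c' : ℕ) > n - 1 := hc'
          omega
    · intro c
      calc slots M₂ c = (M₂.filter (fun p => p.2 = c)).card := rfl
        _ ≤ M₂.card := Finset.card_le_card (Finset.filter_subset _ _)
        _ = 1 := by simp [hM₂def]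
  -- lexPrefers for the singleton list
  have hlexsing : lexPrefers (pref true) ({last} : Finset (Fin n)) ∅ := by
    refine ⟨last, by simp, ?_⟩
    intro d hd
    simp only [Finset.sdiff_empty, Finset.empty_sdiff, Finset.union_empty,
      Finset.mem_singleton] at hd
    subst hd; exact le_refl _
  refine ⟨?_, ?_, ?_, ?_⟩
  · intro M
    constructor
    · rintro ⟨hM, hopt⟩
      rcases Finset.subset_singleton_iff.mp (hbtrue M hM) with ht | ht
      · -- a₂ gets nothing
        by_cases hf : bundle M false = Finset.univ
        · left
          exact bundles_eq_ext _ _ (by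
            intro a; cases a
            · rw [hf, hb1f]
            · rw [ht, hb1t])
        · exfalso
          apply hopt M₁ hM1
          constructor
          · exact ⟨false, by
              rw [hb1f]
              simpa [hpref] using lex_univ (bundle M false) hf⟩
          · intro a
            cases a
            · rw [hb1f]; exact not_lex_univ _ _
            · rw [ht, hb1t]; exact not_lex_self _ _
      · -- a₂ gets last, so a₁ gets nothing
        right
        have hf : bundle M false = ∅ := by
          by_contra hne
          obtain ⟨c, hc⟩ := Finset.nonempty_iff_ne_empty.mpr hne
          have hl := hlastmem M hM c hc
          exact hnotboth M hM.2 ⟨(mem_bundle _ _ _).mp hl,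
            (mem_bundle _ _ _).mp (by rw [ht]; simp)⟩
        exact bundles_eq_ext _ _ (by
          intro a; cases a
          · rw [hf, hb2f]
          · rw [ht, hb2t])
    · rintro (rfl | rfl)
      · -- M₁ is Pareto optimal
        refine ⟨hM1, ?_⟩
        rintro M' hM' ⟨⟨a, ha⟩, hno⟩
        have h1 : bundle M' false = Finset.univ := by
          by_contra h
          exact hno false (by
            rw [hb1f]
            simpa [hpref] using lex_univ (bundle M' false) h)
        have h2 : bundle M' true = ∅ := by
          rcases Finset.subset_singleton_iff.mp (hbtrue M' hM') with h | h
          · exact h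
          · exfalso
            refine hnotboth M' hM'.2 ⟨?_, ?_⟩
            · exact (mem_bundle _ _ _).mp (by rw [h1]; simp)
            · exact (mem_bundle _ _ _).mp (by rw [h]; simp)
        cases a
        · rw [h1, hb1f] at ha; exact not_lex_self _ _ ha
        · rw [h2, hb1t] at ha; exact not_lex_self _ _ ha
      · -- M₂ is Pareto optimal
        refine ⟨hM2, ?_⟩
        rintro M' hM' ⟨⟨a, ha⟩, hno⟩
        have h1 : bundle M' true = {last} := by
          rcases Finset.subset_singleton_iff.mp (hbtrue M' hM') with h | h
          · exfalso
            exact hno true (by rw [hb2t, h]; exact hlexsing)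
          · exact h
        have h2 : bundle M' false = ∅ := by
          by_contra hne
          obtain ⟨c, hc⟩ := Finset.nonempty_iff_ne_empty.mpr hne
          have hl := hlastmem M' hM' c hc
          exact hnotboth M' hM'.2 ⟨(mem_bundle _ _ _).mp hl,
            (mem_bundle _ _ _).mp (by rw [h1]; simp)⟩
        cases a
        · rw [h2, hb2f] at ha; exact not_lex_self _ _ ha
        · rw [h1, hb2t] at ha; exact not_lex_self _ _ ha
  · intro h
    have h0 : (false, last) ∈ M₁ := by
      rw [hM₁def]; simp
    rw [h, hM₂def] at h0
    simp at h0
  · show (Finset.univ.image (fun j : Fin n => (false, j))).card = n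
    have hinj : Function.Injective (fun j : Fin n => ((false, j) : Bool × Fin n)) := by
      intro x y hxy; simpa using hxy
    rw [Finset.card_image_of_injective _ hinj, Finset.card_univ, Fintype.card_fin]
  · show ({(true, last)} : Finset (Bool × Fin n)).card = 1
    simp
end

section
/- For every integer n ≥ 1, consider the CAPR instance with lexicographic preferences having applicants a_1,…,a_n, each of capacity n, and courses c_1,…,c_{2n}, each of capacity 1; every applicant's preference list is c_1, c_2, …, c_{2n} (all courses in increasing indicial order); the prerequisites, identical for all applicants, are the strict partial order generated by the chain c_1 → c_2 → … → c_{2n}. Then this instance has exactly n Pareto optimal matchings, namely for each i (1 ≤ i ≤ n) the matching M_i = {(a_i, c_j) : n+1 ≤ j ≤ 2n}, in which a_i is assigned the bundle {c_{n+1}, c_{n+2}, …, c_{2n}} and no course is assigned to any other applicant. -/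
open Finset

/-- The matching `M_i`: applicant `a_i` is assigned the bundle
`{c_{n+1}, …, c_{2n}}` and no course is assigned to any other applicant. -/
def Mi (n : ℕ) (i : Fin n) : Finset (Fin n × Fin (2 * n)) :=
  ({i} : Finset (Fin n)) ×ˢ (Finset.univ.filter fun j : Fin (2 * n) => n ≤ (j : ℕ))

namespace CAPRaux

lemma mem_bundle {A C : Type*} [DecidableEq A] [DecidableEq C]
    {M : Finset (A × C)} {a : A} {c : C} :
    c ∈ bundle M a ↔ (a, c) ∈ M := by
  constructor
  · intro h
    simp only [bundle, Finset.mem_image, Finset.mem_filter] at h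
    obtain ⟨p, ⟨hp, h1⟩, h2⟩ := h
    have : p = (a, c) := Prod.ext h1 h2
    rwa [this] at hp
  · intro h
    simp only [bundle, Finset.mem_image, Finset.mem_filter]
    exact ⟨(a, c), ⟨h, rfl⟩, rfl⟩

lemma matching_eq_of_bundles {A C : Type*} [DecidableEq A] [DecidableEq C]
    {M M' : Finset (A × C)}
    (h : ∀ a, bundle M a = bundle M' a) : M = M' := by
  ext ⟨a, c⟩
  rw [← mem_bundle, ← mem_bundle, h a]

lemma two_le_slots {A C : Type*} [DecidableEq A] [DecidableEq C]
    {M : Finset (A × C)} {a b : A} {c : C}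
    (hab : a ≠ b) (ha : (a, c) ∈ M) (hb : (b, c) ∈ M) : 2 ≤ slots M c := by
  rw [slots]
  refine Finset.one_lt_card.mpr ⟨(a, c), ?_, (b, c), ?_, ?_⟩ <;>
    simp [ha, hb, hab]

lemma not_lexPrefers_of_subset {C : Type*} [DecidableEq C]
    {l : List C} {S T : Finset C} (h : S ⊆ T) :
    ¬ lexPrefers l S T := by
  rintro ⟨c, hc, -⟩
  rw [Finset.mem_sdiff] at hc
  exact hc.2 (h hc.1)

lemma lexPrefers_finRange_of_ssubset {m : ℕ} {S T : Finset (Fin m)} (h : S ⊂ T) :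
    lexPrefers (List.finRange m) T S := by
  have hne : (T \ S).Nonempty := by
    rw [Finset.sdiff_nonempty]
    exact fun hts => h.2 hts
  refine ⟨(T \ S).min' hne, (T \ S).min'_mem hne, ?_⟩
  intro d hd
  have hST : S \ T = ∅ := Finset.sdiff_eq_empty_iff_subset.mpr h.1
  rw [hST, Finset.union_empty] at hd
  rw [List.idxOf_finRange, List.idxOf_finRange]
  exact (T \ S).min'_le d hd

def top (n : ℕ) : Finset (Fin (2 * n)) :=
  Finset.univ.filter fun j : Fin (2 * n) => n ≤ (j : ℕ)

lemma mem_top {n : ℕ} {j : Fin (2 * n)} : j ∈ top n ↔ n ≤ (j : ℕ) := by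
  simp [top]

lemma mem_Mi {n : ℕ} {i : Fin n} {p : Fin n × Fin (2 * n)} :
    p ∈ Mi n i ↔ p.1 = i ∧ n ≤ (p.2 : ℕ) := by
  obtain ⟨p1, p2⟩ := p
  simp only [Mi, Finset.mem_product, Finset.mem_singleton, Finset.mem_filter,
    Finset.mem_univ, true_and]

lemma bundle_Mi {n : ℕ} (i a : Fin n) :
    bundle (Mi n i) a = if a = i then top n else ∅ := by
  ext c
  rw [mem_bundle, mem_Mi]
  by_cases h : a = i <;> simp [h, mem_top]

lemma top_eq_Ici {n : ℕ} (hn : 0 < n) :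
    top n = Finset.Ici (⟨n, by omega⟩ : Fin (2 * n)) := by
  ext j
  simp [mem_top, Fin.le_def]

lemma card_top {n : ℕ} (hn : 0 < n) : (top n).card = n := by
  rw [top_eq_Ici hn, Fin.card_Ici]
  simp only []
  omega

lemma subset_top {n : ℕ} {S : Finset (Fin (2 * n))}
    (hup : ∀ c ∈ S, ∀ c' : Fin (2 * n), c < c' → c' ∈ S) (hcard : S.card ≤ n) :
    S ⊆ top n := by
  intro c hc
  rw [mem_top]
  by_contra hlt
  push_neg at hlt
  have hIci : Finset.Ici c ⊆ S := by
    intro x hx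
    rw [Finset.mem_Ici] at hx
    rcases eq_or_lt_of_le hx with rfl | hx
    · exact hc
    · exact hup c hc x hx
  have h1 := Finset.card_le_card hIci
  rw [Fin.card_Ici] at h1
  have := c.isLt
  omega

lemma last_mem {n : ℕ} (hn : 0 < n) {S : Finset (Fin (2 * n))}
    (hup : ∀ c ∈ S, ∀ c' : Fin (2 * n), c < c' → c' ∈ S) (hne : S.Nonempty) :
    (⟨2 * n - 1, by omega⟩ : Fin (2 * n)) ∈ S := by
  obtain ⟨c, hc⟩ := hne
  rcases eq_or_lt_of_le (show c ≤ ⟨2 * n - 1, by omega⟩ by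
      rw [Fin.le_def]; have := c.isLt; simp; omega) with h | h
  · rwa [← h]
  · exact hup c hc _ h

lemma isMatching_Mi {n : ℕ} (hn : 0 < n) (i : Fin n) :
    IsMatching (fun _ : Fin n => List.finRange (2 * n)) (fun _ => n) (fun _ => 1)
      (fun _ (c c' : Fin (2 * n)) => c < c') (Mi n i) := by
  constructor
  · intro a
    rw [IsFeasible, bundle_Mi]
    by_cases h : a = i
    · rw [if_pos h]
      refine ⟨fun c _ => List.mem_finRange c, le_of_eq (card_top hn), ?_⟩
      intro c hc c' hcc'
      rw [mem_top] at *
      rw [Fin.lt_def] at hcc'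
      omega
    · simp [h, IsFeasible]
  · intro c
    rw [slots]
    have hsub : (Mi n i).filter (fun p => p.2 = c) ⊆ {(i, c)} := by
      intro p hp
      rw [Finset.mem_filter] at hp
      obtain ⟨hp1, hp2⟩ := hp
      rw [mem_Mi] at hp1
      rw [Finset.mem_singleton]
      exact Prod.ext hp1.1 hp2
    calc ((Mi n i).filter (fun p => p.2 = c)).card ≤ ({(i, c)} : Finset _).card :=
          Finset.card_le_card hsub
      _ = 1 := Finset.card_singleton _

end CAPRaux

/-- the CAPR instance with applicants `a_1, …, a_n`, each of capacity
`n`, and courses `c_1, …, c_{2n}`, each of capacity 1, where every applicant ranks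
all courses in increasing indicial order and the prerequisites (identical for all
applicants) form the strict partial order generated by the chain
`c_1 → c_2 → … → c_{2n}`, i.e. `c_i → c_j` iff `i < j`.  Its Pareto optimal
matchings are exactly the `n` pairwise distinct matchings `M_1, …, M_n`, where in
`M_i` applicant `a_i` receives `{c_{n+1}, …, c_{2n}}` and everyone else nothing. -/
theorem capr_exactly_n_poms {n : ℕ} (hn : 0 < n) :
    (∀ M : Finset (Fin n × Fin (2 * n)),
        ParetoOptimal
          (fun _ : Fin n => List.finRange (2 * n))
          (fun _ => n) (fun _ => 1)
          (fun _ (c c' : Fin (2 * n)) => c < c') M ↔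
        ∃ i : Fin n, M = Mi n i) ∧
    Function.Injective (Mi n) := by
  open CAPRaux in
  constructor
  · intro M
    constructor
    · -- Pareto optimal → ∃ i, M = Mi n i
      rintro ⟨hM, hopt⟩
      -- basic facts about the matching M
      have hsub : ∀ a, bundle M a ⊆ top n := fun a =>
        subset_top (hM.1 a).2.2 (hM.1 a).2.1
      have hdisj : ∀ a b : Fin n, a ≠ b →
          ∀ c : Fin (2 * n), c ∈ bundle M a → c ∈ bundle M b → False := by
        intro a b hab c hca hcb
        have := two_le_slots hab (mem_bundle.mp hca) (mem_bundle.mp hcb)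
        have h1 : slots M c ≤ 1 := hM.2 c
        omega
      by_cases hA : ∃ a, (bundle M a).Nonempty
      · obtain ⟨a, hne⟩ := hA
        have huniq : ∀ b, b ≠ a → bundle M b = ∅ := by
          intro b hb
          by_contra hbne
          rw [← Finset.not_nonempty_iff_eq_empty, not_not] at hbne
          exact hdisj b a hb _ (last_mem hn (hM.1 b).2.2 hbne)
            (last_mem hn (hM.1 a).2.2 hne)
        have htop : bundle M a = top n := by
          by_contra hne2
          refine hopt (Mi n a) (isMatching_Mi hn a) ⟨⟨a, ?_⟩, ?_⟩
          · rw [bundle_Mi, if_pos rfl]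
            exact lexPrefers_finRange_of_ssubset
              (Finset.ssubset_iff_subset_ne.mpr ⟨hsub a, hne2⟩)
          · intro b
            rw [bundle_Mi]
            by_cases hb : b = a
            · rw [if_pos hb, hb]
              exact not_lexPrefers_of_subset (hsub a)
            · rw [if_neg hb, huniq b hb]
              exact not_lexPrefers_of_subset (Finset.Subset.refl _)
        refine ⟨a, matching_eq_of_bundles fun b => ?_⟩
        rw [bundle_Mi]
        by_cases hb : b = a
        · rw [if_pos hb, hb, htop]
        · rw [if_neg hb, huniq b hb]
      · push_neg at hA
        exfalso
        have hall : ∀ a, bundle M a = ∅ := fun a =>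
          hA a
        set i0 : Fin n := ⟨0, hn⟩
        refine hopt (Mi n i0) (isMatching_Mi hn i0) ⟨⟨i0, ?_⟩, ?_⟩
        · rw [bundle_Mi, if_pos rfl, hall i0]
          refine lexPrefers_finRange_of_ssubset (Finset.empty_ssubset.mpr ?_)
          exact ⟨⟨n, by omega⟩, mem_top.mpr (le_refl n)⟩
        · intro b
          rw [hall b]
          exact not_lexPrefers_of_subset (Finset.empty_subset _)
    · -- ∃ i, M = Mi n i → Pareto optimal
      rintro ⟨i, rfl⟩
      refine ⟨isMatching_Mi hn i, ?_⟩
      rintro M' hM' ⟨⟨a, hpref⟩, hno⟩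
      have hsub' : ∀ b, bundle M' b ⊆ top n := fun b =>
        subset_top (hM'.1 b).2.2 (hM'.1 b).2.1
      have hBi : bundle M' i = top n := by
        by_contra hne
        refine hno i ?_
        rw [bundle_Mi, if_pos rfl]
        exact lexPrefers_finRange_of_ssubset
          (Finset.ssubset_iff_subset_ne.mpr ⟨hsub' i, hne⟩)
      have hBa : ∀ b, b ≠ i → bundle M' b = ∅ := by
        intro b hb
        by_contra hbne
        rw [← Finset.not_nonempty_iff_eq_empty, not_not] at hbne
        have hlb := last_mem hn (hM'.1 b).2.2 hbne
        have hli : (⟨2 * n - 1, by omega⟩ : Fin (2 * n)) ∈ bundle M' i := by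
          rw [hBi, mem_top]; simp; omega
        have := two_le_slots hb (mem_bundle.mp hlb) (mem_bundle.mp hli)
        have h1 : slots M' (⟨2 * n - 1, by omega⟩ : Fin (2 * n)) ≤ 1 :=
          hM'.2 _
        omega
      have hMM : M' = Mi n i := by
        refine matching_eq_of_bundles fun b => ?_
        rw [bundle_Mi]
        by_cases hb : b = i
        · rw [if_pos hb, hb, hBi]
        · rw [if_neg hb, hBa b hb]
      rw [hMM] at hpref
      exact not_lexPrefers_of_subset (Finset.Subset.refl _) hpref
  · intro i j h
    have hmem : ((i, ⟨n, by omega⟩) : Fin n × Fin (2 * n)) ∈ Mi n i :=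
      CAPRaux.mem_Mi.mpr ⟨rfl, le_refl n⟩
    rw [h] at hmem
    exact (CAPRaux.mem_Mi.mp hmem).1
end
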